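/- Let ψ : ℝ^{1+2} → ℂ² be twice continuously differentiable and v : ℝ^{1+2} → ℝ satisfy, with Dirac matrices obeying the Clifford relations (η = diag(-1,1,1)): iγ^μ∂_μψ = vψ and -□v + v = ψ*γ⁰ψ. Then ψ̃ := ψ - iγ^ν∂_ν(vψ) satisfies iγ^μ∂_μψ̃ = (ψ*γ⁰ψ)ψ - iγ^ν v ∂_ν(vψ) - 2 η^{αβ}(∂_α v)(∂_β ψ). -/

import Mathlib

open Matrix

noncomputable section

abbrev M2 := Matrix (Fin 2) (Fin 2) ℂ

/-- The Minkowski metric η = diag(-1, 1, 1). -/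
def η : Fin 3 → Fin 3 → ℝ := fun μ ν =>
  if μ = ν then (if μ = 0 then -1 else 1) else 0

/-- Partial derivative in the i-th coordinate direction on ℝ^{1+2}. -/
def pd {E : Type*} [NormedAddCommGroup E] [NormedSpace ℝ E]
    (i : Fin 3) (f : (Fin 3 → ℝ) → E) (p : Fin 3 → ℝ) : E :=
  fderiv ℝ f p (Pi.single i 1)

/-- The wave operator □ = -∂_t² + ∂₁² + ∂₂². -/
def Box {E : Type*} [NormedAddCommGroup E] [NormedSpace ℝ E]
    (f : (Fin 3 → ℝ) → E) (p : Fin 3 → ℝ) : E :=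
  -pd 0 (fun q => pd 0 f q) p + pd 1 (fun q => pd 1 f q) p + pd 2 (fun q => pd 2 f q) p

/-! ### Auxiliary lemmas -/

abbrev E2 := Fin 2 → ℂ

lemma pd_sub {f g : (Fin 3 → ℝ) → E2} {p : Fin 3 → ℝ} (i : Fin 3)
    (hf : DifferentiableAt ℝ f p) (hg : DifferentiableAt ℝ g p) :
    pd i (fun q => f q - g q) p = pd i f p - pd i g p := by
  simp [pd, fderiv_fun_sub hf hg]

lemma pd_add {f g : (Fin 3 → ℝ) → E2} {p : Fin 3 → ℝ} (i : Fin 3)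
    (hf : DifferentiableAt ℝ f p) (hg : DifferentiableAt ℝ g p) :
    pd i (fun q => f q + g q) p = pd i f p + pd i g p := by
  simp [pd, fderiv_fun_add hf hg]

lemma pd_clm {f : (Fin 3 → ℝ) → E2} {p : Fin 3 → ℝ} (i : Fin 3) (L : E2 →L[ℝ] E2)
    (hf : DifferentiableAt ℝ f p) :
    pd i (fun q => L (f q)) p = L (pd i f p) := by
  unfold pd
  rw [show (fun q => L (f q)) = L ∘ f from rfl,
    (L.hasFDerivAt.comp p hf.hasFDerivAt).fderiv]
  rfl

def mvL (A : M2) : E2 →L[ℝ] E2 :=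
  LinearMap.toContinuousLinearMap ((Matrix.mulVecLin A).restrictScalars ℝ)

@[simp] lemma mvL_apply (A : M2) (x : E2) : mvL A x = A.mulVec x := rfl

def smClm (c : ℂ) : E2 →L[ℝ] E2 := c • (ContinuousLinearMap.id ℝ E2)

@[simp] lemma smClm_apply (c : ℂ) (x : E2) : smClm c x = c • x := rfl

lemma pd_sum {f : Fin 3 → (Fin 3 → ℝ) → E2} {p : Fin 3 → ℝ} (i : Fin 3)
    (hf : ∀ μ, DifferentiableAt ℝ (f μ) p) :
    pd i (fun q => ∑ μ : Fin 3, f μ q) p = ∑ μ : Fin 3, pd i (f μ) p := by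
  simp [pd, fderiv_fun_sum (fun μ _ => hf μ)]

lemma pd_smul {v : (Fin 3 → ℝ) → ℝ} {f : (Fin 3 → ℝ) → E2} {p : Fin 3 → ℝ} (i : Fin 3)
    (hv : DifferentiableAt ℝ v p) (hf : DifferentiableAt ℝ f p) :
    pd i (fun q => (v q : ℂ) • f q) p
      = ((pd i v p : ℝ) : ℂ) • f p + (v p : ℂ) • pd i f p := by
  have hcv : HasFDerivAt (fun q => ((v q : ℝ) : ℂ))
      (Complex.ofRealCLM.comp (fderiv ℝ v p)) p :=
    Complex.ofRealCLM.hasFDerivAt.comp p hv.hasFDerivAt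
  have h := hcv.smul hf.hasFDerivAt
  unfold pd
  rw [(show HasFDerivAt (fun q => (v q : ℂ) • f q) _ p from h).fderiv]
  simp [pd, add_comm]

lemma contDiff_pd {F : Type*} [NormedAddCommGroup F] [NormedSpace ℝ F]
    {f : (Fin 3 → ℝ) → F} (hf : ContDiff ℝ 2 f) (i : Fin 3) :
    ContDiff ℝ 1 (fun q => pd i f q) :=
  (hf.fderiv_right (by norm_num)).clm_apply contDiff_const

lemma pd_comm {F : Type*} [NormedAddCommGroup F] [NormedSpace ℝ F]
    {f : (Fin 3 → ℝ) → F} (hf : ContDiff ℝ 2 f) (i j : Fin 3) (p : Fin 3 → ℝ) :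
    pd i (fun q => pd j f q) p = pd j (fun q => pd i f q) p := by
  have hdf : DifferentiableAt ℝ (fderiv ℝ f) p :=
    ((hf.fderiv_right (m := 1) (by norm_num)).differentiable one_ne_zero) p
  have key : ∀ w u : Fin 3 → ℝ,
      fderiv ℝ (fun q => fderiv ℝ f q w) p u = fderiv ℝ (fderiv ℝ f) p u w := by
    intro w u
    rw [fderiv_clm_apply hdf (differentiableAt_const w)]
    simp
  have hsymm : IsSymmSndFDerivAt ℝ f p := hf.contDiffAt.isSymmSndFDerivAt (by simp [minSmoothness_of_isRCLikeNormedField])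
  unfold pd
  rw [key, key, hsymm.eq]

lemma DD_box (γ : Fin 3 → M2)
    (hClif : ∀ μ ν : Fin 3, γ μ * γ ν + γ ν * γ μ = (-2 * (η μ ν : ℂ)) • (1 : M2))
    (f : (Fin 3 → ℝ) → E2) (hf : ContDiff ℝ 2 f) (p : Fin 3 → ℝ) :
    Complex.I • ∑ μ : Fin 3,
        (γ μ).mulVec (pd μ (fun q => Complex.I •
          ∑ ν : Fin 3, (γ ν).mulVec (pd ν f q)) p)
      = Box f p := by
  have hpd : ∀ ν : Fin 3, Differentiable ℝ (fun q => pd ν f q) :=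
    fun ν => (contDiff_pd hf ν).differentiable one_ne_zero
  have hterm : ∀ ν : Fin 3, DifferentiableAt ℝ (fun q => (γ ν).mulVec (pd ν f q)) p := by
    intro ν
    exact ((mvL (γ ν)).differentiable.comp (hpd ν)).differentiableAt
  have hsum : DifferentiableAt ℝ (fun q => ∑ ν : Fin 3, (γ ν).mulVec (pd ν f q)) p :=
    DifferentiableAt.fun_sum (fun ν _ => hterm ν)
  set S : Fin 3 → Fin 3 → E2 := fun μ ν => pd μ (fun q => pd ν f q) p with hSdef
  have step : ∀ μ : Fin 3,
      pd μ (fun q => Complex.I • ∑ ν : Fin 3, (γ ν).mulVec (pd ν f q)) p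
        = Complex.I • ∑ ν : Fin 3, (γ ν).mulVec (S μ ν) := by
    intro μ
    rw [show (fun q => Complex.I • ∑ ν : Fin 3, (γ ν).mulVec (pd ν f q))
        = (fun q => smClm Complex.I (∑ ν : Fin 3, (γ ν).mulVec (pd ν f q))) from rfl,
      pd_clm μ (smClm Complex.I) hsum]
    simp only [smClm_apply]
    congr 1
    rw [pd_sum μ hterm]
    refine Finset.sum_congr rfl (fun ν _ => ?_)
    rw [show (fun q => (γ ν).mulVec (pd ν f q))
        = (fun q => mvL (γ ν) (pd ν f q)) from rfl,
      pd_clm μ (mvL (γ ν)) (hpd ν p)]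
    rfl
  simp only [step]
  have expand : ∀ μ : Fin 3, (γ μ).mulVec (Complex.I • ∑ ν : Fin 3, (γ ν).mulVec (S μ ν))
      = Complex.I • ∑ ν : Fin 3, (γ μ * γ ν).mulVec (S μ ν) := by
    intro μ
    simp only [← Matrix.mulVecLin_apply, _root_.map_smul, map_sum]
    simp [Matrix.mulVec_mulVec]
  simp only [expand]
  rw [← Finset.smul_sum, smul_smul, Complex.I_mul_I]
  have hdiag : ∀ μ : Fin 3, γ μ * γ μ = ((-(η μ μ) : ℝ) : ℂ) • 1 := by
    intro μ
    have h := hClif μ μ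
    have h2 : (2 : ℂ) • (γ μ * γ μ) = (2 : ℂ) • (((-(η μ μ) : ℝ) : ℂ) • (1 : M2)) := by
      rw [two_smul, h, smul_smul]
      congr 1
      push_cast
      ring
    exact smul_right_injective M2 two_ne_zero h2
  have hanti : ∀ μ ν : Fin 3, μ ≠ ν → γ ν * γ μ = -(γ μ * γ ν) := by
    intro μ ν hne
    have h := hClif μ ν
    have hη : η μ ν = 0 := by simp [η, hne]
    rw [hη] at h
    simp only [Complex.ofReal_zero, mul_zero, zero_smul] at h
    exact eq_neg_of_add_eq_zero_right h
  have hS : ∀ μ ν : Fin 3, S μ ν = S ν μ := fun μ ν => pd_comm hf μ ν p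
  have key : ∑ μ : Fin 3, ∑ ν : Fin 3, (γ μ * γ ν).mulVec (S μ ν)
      = S 0 0 - S 1 1 - S 2 2 := by
    simp only [Fin.sum_univ_three]
    rw [hS 1 0, hS 2 0, hS 2 1, hanti 0 1 (by decide), hanti 0 2 (by decide),
      hanti 1 2 (by decide), hdiag 0, hdiag 1, hdiag 2]
    simp only [η, if_pos rfl, if_neg (by decide : ¬ (1 : Fin 3) = 0),
      if_neg (by decide : ¬ (2 : Fin 3) = 0), reduceIte]
    simp [Matrix.neg_mulVec, Matrix.smul_mulVec, Matrix.one_mulVec]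
    ext i
    fin_cases i <;> simp [vecHead, vecTail] <;> ring
  rw [key]
  show (-1 : ℂ) • (S 0 0 - S 1 1 - S 2 2) = Box f p
  unfold Box
  show _ = -S 0 0 + S 1 1 + S 2 2
  module

lemma box_smul (v : (Fin 3 → ℝ) → ℝ) (ψ : (Fin 3 → ℝ) → E2)
    (hv : ContDiff ℝ 2 v) (hψ : ContDiff ℝ 2 ψ) (p : Fin 3 → ℝ) :
    Box (fun q => (v q : ℂ) • ψ q) p
      = ((Box v p : ℝ) : ℂ) • ψ p + (v p : ℂ) • Box ψ p
        + (2 : ℂ) • (-((pd 0 v p : ℝ) : ℂ) • pd 0 ψ p + ((pd 1 v p : ℝ) : ℂ) • pd 1 ψ p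
            + ((pd 2 v p : ℝ) : ℂ) • pd 2 ψ p) := by
  have hv1 : Differentiable ℝ v := hv.differentiable two_ne_zero
  have hψ1 : Differentiable ℝ ψ := hψ.differentiable two_ne_zero
  have hstep : ∀ i : Fin 3,
      pd i (fun q => pd i (fun r => (v r : ℂ) • ψ r) q) p
        = ((pd i (fun q => pd i v q) p : ℝ) : ℂ) • ψ p
          + ((pd i v p : ℝ) : ℂ) • pd i ψ p
          + (((pd i v p : ℝ) : ℂ) • pd i ψ p
            + (v p : ℂ) • pd i (fun q => pd i ψ q) p) := by
    intro i
    have hfun : (fun q => pd i (fun r => (v r : ℂ) • ψ r) q)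
        = fun q => ((pd i v q : ℝ) : ℂ) • ψ q + (v q : ℂ) • pd i ψ q :=
      funext fun q => pd_smul i (hv1 q) (hψ1 q)
    have hd1 : DifferentiableAt ℝ (fun q => ((pd i v q : ℝ) : ℂ) • ψ q) p :=
      ((Complex.ofRealCLM.differentiable.comp
        ((contDiff_pd hv i).differentiable one_ne_zero)).smul hψ1).differentiableAt
    have hd2 : DifferentiableAt ℝ (fun q => ((v q : ℝ) : ℂ) • pd i ψ q) p :=
      ((Complex.ofRealCLM.differentiable.comp hv1).smul
        ((contDiff_pd hψ i).differentiable one_ne_zero)).differentiableAt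
    rw [hfun, pd_add i hd1 hd2,
      pd_smul i (((contDiff_pd hv i).differentiable one_ne_zero) p) (hψ1 p),
      pd_smul i (hv1 p) (((contDiff_pd hψ i).differentiable one_ne_zero) p)]
  unfold Box
  rw [hstep 0, hstep 1, hstep 2]
  push_cast
  module

theorem transformed_Dirac_equation
    (γ : Fin 3 → M2)
    (hClif : ∀ μ ν : Fin 3, γ μ * γ ν + γ ν * γ μ = (-2 * (η μ ν : ℂ)) • (1 : M2))
    (ψ : (Fin 3 → ℝ) → (Fin 2 → ℂ)) (v : (Fin 3 → ℝ) → ℝ)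
    (hψ : ContDiff ℝ 2 ψ) (hv : ContDiff ℝ 2 v)
    -- the Dirac operator iγ^μ ∂_μ
    (D : ((Fin 3 → ℝ) → (Fin 2 → ℂ)) → (Fin 3 → ℝ) → (Fin 2 → ℂ))
    (hD : D = fun Θ q => Complex.I • ∑ μ : Fin 3, (γ μ).mulVec (pd μ Θ q))
    -- the Dirac equation iγ^μ∂_μψ = vψ
    (hDirac : ∀ q, D ψ q = (v q : ℂ) • ψ q)
    -- the Klein-Gordon equation -□v + v = ψ*γ⁰ψ
    (hKG : ∀ q, ((-Box v q + v q : ℝ) : ℂ) = star (ψ q) ⬝ᵥ (γ 0).mulVec (ψ q))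
    (p : Fin 3 → ℝ) :
    -- ψ̃ := ψ - iγ^ν∂_ν(vψ)
    D (fun q => ψ q - D (fun r => (v r : ℂ) • ψ r) q) p
      = (star (ψ p) ⬝ᵥ (γ 0).mulVec (ψ p)) • ψ p
        - Complex.I • ∑ ν : Fin 3, (v p : ℂ) • (γ ν).mulVec (pd ν (fun r => (v r : ℂ) • ψ r) p)
        - (2 : ℂ) • (-((pd 0 v p : ℝ) : ℂ) • pd 0 ψ p + ((pd 1 v p : ℝ) : ℂ) • pd 1 ψ p
            + ((pd 2 v p : ℝ) : ℂ) • pd 2 ψ p) := by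
  subst hD
  set φ : (Fin 3 → ℝ) → E2 := fun r => (v r : ℂ) • ψ r with hφdef
  have hco : ContDiff ℝ 2 (fun r => ((v r : ℝ) : ℂ)) := Complex.ofRealCLM.contDiff.comp hv
  have hφ : ContDiff ℝ 2 φ := by
    have h1 : ContDiff ℝ 2 (fun r =>
        (ContinuousLinearMap.lsmul ℝ ℂ : ℂ →L[ℝ] E2 →L[ℝ] E2) ((v r : ℝ) : ℂ)) :=
      (ContinuousLinearMap.lsmul ℝ ℂ : ℂ →L[ℝ] E2 →L[ℝ] E2).contDiff.comp hco
    have h2 := h1.clm_apply hψ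
    simpa [ContinuousLinearMap.lsmul_apply, hφdef] using h2
  have hψ1 : Differentiable ℝ ψ := hψ.differentiable two_ne_zero
  have hDφdiff : Differentiable ℝ
      (fun q => Complex.I • ∑ ν : Fin 3, (γ ν).mulVec (pd ν φ q)) := by
    have : ∀ ν : Fin 3, Differentiable ℝ (fun q => (γ ν).mulVec (pd ν φ q)) := by
      intro ν
      exact (mvL (γ ν)).differentiable.comp ((contDiff_pd hφ ν).differentiable one_ne_zero)
    exact (Differentiable.fun_sum (fun ν _ => this ν)).const_smul Complex.I
  -- split the derivative of the difference
  have split : ∀ μ : Fin 3,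
      pd μ (fun q => ψ q - Complex.I • ∑ ν : Fin 3, (γ ν).mulVec (pd ν φ q)) p
        = pd μ ψ p
          - pd μ (fun q => Complex.I • ∑ ν : Fin 3, (γ ν).mulVec (pd ν φ q)) p :=
    fun μ => pd_sub μ (hψ1 p) (hDφdiff p)
  simp only [split, Matrix.mulVec_sub, smul_sub, Finset.sum_sub_distrib]
  have hBoxφ := DD_box γ hClif φ hφ p
  rw [hBoxφ]
  have hDirac' : (Complex.I • ∑ μ : Fin 3, (γ μ).mulVec (pd μ ψ p)) = (v p : ℂ) • ψ p :=
    hDirac p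
  rw [hDirac']
  -- Box ψ = D(vψ) via the Dirac equation
  have hψeq : (fun q => Complex.I • ∑ ν : Fin 3, (γ ν).mulVec (pd ν ψ q)) = φ :=
    funext hDirac
  have hBoxψ : Box ψ p = Complex.I • ∑ ν : Fin 3, (γ ν).mulVec (pd ν φ p) := by
    rw [← DD_box γ hClif ψ hψ p, hψeq]
  rw [box_smul v ψ hv hψ p, hBoxψ, ← hKG p]
  have hmid : Complex.I • ∑ ν : Fin 3, (v p : ℂ) • (γ ν).mulVec (pd ν φ p)
      = (v p : ℂ) • (Complex.I • ∑ ν : Fin 3, (γ ν).mulVec (pd ν φ p)) := by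
    rw [← Finset.smul_sum, smul_comm]
  rw [hmid]
  push_cast
  set X := Complex.I • ∑ ν : Fin 3, (γ ν).mulVec (pd ν φ p)
  set Q0 := pd 0 ψ p
  set Q1 := pd 1 ψ p
  set Q2 := pd 2 ψ p
  module
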